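/- In a monotone Boolean automata network, every synchronous elementary transition x ⇒ y such that no subset of Δ(x,y) induces an x-critical cycle is totally sequentialisable: there exists a permutation i_1, ..., i_m of Δ(x,y) such that flipping the coordinates one by one in this order gives a chain of asynchronous transitions from x to y. -/

import Mathlib

namespace BAN

/-- A configuration of a Boolean automata network of size `n`. -/
abbrev Config (n : ℕ) := Fin n → Bool

/-- `s(b) = 2b - 1 ∈ {-1,1}`. -/
def sgn (b : Bool) : ℤ := if b then 1 else -1

/-- Boolean as integer `0/1`. -/
def bint (b : Bool) : ℤ := if b then 1 else 0

/-- `x̄^i` : `x` with coordinate `i` flipped. -/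
def flip {n : ℕ} (x : Config n) (i : Fin n) : Config n := Function.update x i (!x i)

/-- A Boolean automata network of size `n`: the family of local transition functions. -/
def Net (n : ℕ) := Fin n → Config n → Bool

/-- `f i` is positively (locally) monotone in coordinate `j`:
`s(x_j)·(f_i(x) − f_i(x̄^j)) ≥ 0` for all `x`. -/
def posIn {n : ℕ} (f : Net n) (i j : Fin n) : Prop :=
  ∀ x : Config n, 0 ≤ sgn (x j) * (bint (f i x) - bint (f i (flip x j)))

/-- `f i` is negatively (locally) monotone in coordinate `j`. -/
def negIu {n : ℕ} (f : Net n) (i j : Fin n) : Prop :=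
  ∀ x : Config n, sgn (x j) * (bint (f i x) - bint (f i (flip x j))) ≤ 0

/-- The network is (locally) monotone. -/
def MonotoneNet {n : ℕ} (f : Net n) : Prop := ∀ i j, posIn f i j ∨ negIu f i j

/-- `(j,i)` is an arc of the interaction graph: `f i` depends on coordinate `j`. -/
def arc {n : ℕ} (f : Net n) (j i : Fin n) : Prop := ∃ x, f i x ≠ f i (flip x j)

/-- The arc `(j,i)` exists and has sign `s` (`+1` or `-1`). -/
def hasSign {n : ℕ} (f : Net n) (j i : Fin n) (s : ℤ) : Prop :=
  arc f j i ∧ ((s = 1 ∧ posIn f i j) ∨ (s = -1 ∧ negIu f i j))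

/-- Automaton `i` is unstable in `x`. -/
def unstable {n : ℕ} (f : Net n) (x : Config n) (i : Fin n) : Prop := f i x ≠ x i

/-- The arc `(j,i)` is frustrated in configuration `x`: `s(x_j)·s(x_i) = − sign(j,i)`. -/
def frustrated {n : ℕ} (f : Net n) (x : Config n) (j i : Fin n) : Prop :=
  ∃ s : ℤ, hasSign f j i s ∧ sgn (x j) * sgn (x i) = -s

/-- `Δ(x,y)`: the set of coordinates where `x` and `y` differ. -/
def diff {n : ℕ} (x y : Config n) : Finset (Fin n) :=
  Finset.univ.filter fun i => x i ≠ y i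

/-- `U(x)`: the set of unstable automata of `x`. -/
def U {n : ℕ} (f : Net n) (x : Config n) : Finset (Fin n) :=
  Finset.univ.filter fun i => f i x ≠ x i

/-- Elementary transition `x → y`: `∅ ≠ Δ(x,y) ⊆ U(x)`. -/
def elemTrans {n : ℕ} (f : Net n) (x y : Config n) : Prop :=
  (diff x y).Nonempty ∧ diff x y ⊆ U f x

/-- Asynchronous (atomic) transition: flip one unstable coordinate. -/
def asyncStep {n : ℕ} (f : Net n) (x y : Config n) : Prop :=
  ∃ i, unstable f x i ∧ y = flip x i

/-- Asynchronous reachability (derivations). -/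
def asyncReach {n : ℕ} (f : Net n) : Config n → Config n → Prop :=
  Relation.ReflTransGen (asyncStep f)

/-- `x ⇒ y` is sequentialisable: there is a chain of strictly smaller elementary
transitions from `x` to `y`. -/
def seqable {n : ℕ} (f : Net n) (x y : Config n) : Prop :=
  ∃ l : List (Config n),
    l.Chain' (fun u v => elemTrans f u v ∧ (diff u v).card < (diff x y).card) ∧
    l.head? = some x ∧ l.getLast? = some y

/-- Non-sequentialisable (normal) synchronous transition. -/
def nonSeq {n : ℕ} (f : Net n) (x y : Config n) : Prop :=
  elemTrans f x y ∧ 2 ≤ (diff x y).card ∧ ¬ seqable f x y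

/-- Cyclic successor on `Fin ℓ`. -/
def cnext {ℓ : ℕ} (k : Fin ℓ) : Fin ℓ := ⟨(k.val + 1) % ℓ, Nat.mod_lt _ k.pos⟩

/-- `c : Fin ℓ → Fin n` describes a cycle of the interaction graph of `f`
(a closed walk with pairwise distinct arcs). -/
def isCycle {n : ℕ} (f : Net n) {ℓ : ℕ} (c : Fin ℓ → Fin n) : Prop :=
  0 < ℓ ∧ (∀ k, arc f (c k) (c (cnext k))) ∧
    Function.Injective (fun k => (c k, c (cnext k)))

/-- The cycle `c` is `x`-critical: all nodes unstable in `x`, all arcs frustrated in `x`. -/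
def xCriticalCycle {n : ℕ} (f : Net n) (x : Config n) {ℓ : ℕ} (c : Fin ℓ → Fin n) : Prop :=
  isCycle f c ∧ (∀ k, unstable f x (c k)) ∧ ∀ k, frustrated f x (c k) (c (cnext k))

/-- `x̄^S`: flip all coordinates of `x` in `S`. -/
def flipSet {n : ℕ} (x : Config n) (S : Finset (Fin n)) : Config n :=
  fun i => if i ∈ S then !x i else x i

/-- `x̄^V`. -/
def flipAll {n : ℕ} (x : Config n) : Config n := fun i => !x i

/-- Union of the first `t` blocks of a list of finsets. -/
def prefUnion {n : ℕ} (D : List (Finset (Fin n))) (t : ℕ) : Finset (Fin n) :=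
  (D.take t).foldr (· ∪ ·) ∅

/-- `x ⇒ y` is totally sequentialisable: some ordering of `Δ(x,y)` gives a chain of
asynchronous transitions from `x` to `y`. -/
def totallySeq {n : ℕ} (f : Net n) (x y : Config n) : Prop :=
  ∃ l : List (Fin n), l.Nodup ∧ l.toFinset = diff x y ∧
    ∀ t : Fin l.length, unstable f ((l.take t.val).foldl flip x) (l.get t)

/-- Attractor of the asynchronous transition graph: nonempty, closed, strongly
connected set of configurations (terminal SCC). -/
def isAttractor {n : ℕ} (f : Net n) (A : Set (Config n)) : Prop :=
  A.Nonempty ∧ (∀ a ∈ A, ∀ b, asyncStep f a b → b ∈ A) ∧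
    ∀ a ∈ A, ∀ b ∈ A, asyncReach f a b

/-- A configuration is transient if it belongs to no attractor. -/
def transientCfg {n : ℕ} (f : Net n) (z : Config n) : Prop :=
  ¬ ∃ A : Set (Config n), isAttractor f A ∧ z ∈ A

section Aux

variable {n : ℕ}

lemma flip_apply_self (x : Config n) (j : Fin n) : flip x j j = !x j := by
  simp [flip]

lemma flip_apply_ne (x : Config n) (j i : Fin n) (h : i ≠ j) : flip x j i = x i := by
  simp [flip, Function.update, h]

lemma flip_flip (x : Config n) (j : Fin n) : flip (flip x j) j = x := by
  funext i
  by_cases h : i = j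
  · subst h; simp [flip]
  · rw [flip_apply_ne _ _ _ h, flip_apply_ne _ _ _ h]

lemma step_unstable (f : Net n) (hmono : MonotoneNet f) (x z : Config n) (i j : Fin n)
    (hij : i ≠ j) (hzi : z i = x i) (hzj : z j = x j)
    (hnf : ¬ frustrated f x j i) (hu : f i z ≠ z i) :
    f i (flip z j) ≠ z i := by
  by_cases ha : arc f j i
  · rcases hmono i j with hp | hn
    · have hs : hasSign f j i 1 := ⟨ha, Or.inl ⟨rfl, hp⟩⟩
      have hx : x j = x i := by
        by_contra hne
        exact hnf ⟨1, hs, by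
          cases hxj : x j <;> cases hxi : x i <;> simp_all [sgn]⟩
      have hz : z j = z i := by rw [hzj, hzi, hx]
      have h1 := hp z
      have h2 := hp (flip z j)
      rw [flip_flip, flip_apply_self] at h2
      cases hb1 : f i z <;> cases hb2 : f i (flip z j) <;> cases hb3 : z j <;>
        simp_all [sgn, bint]
    · have hs : hasSign f j i (-1) := ⟨ha, Or.inr ⟨rfl, hn⟩⟩
      have hx : x j ≠ x i := by
        intro heq
        exact hnf ⟨-1, hs, by
          cases hxj : x j <;> cases hxi : x i <;> simp_all [sgn]⟩
      have hz : z j ≠ z i := by rw [hzj, hzi]; exact hx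
      have h1 := hn z
      have h2 := hn (flip z j)
      rw [flip_flip, flip_apply_self] at h2
      cases hb1 : f i z <;> cases hb2 : f i (flip z j) <;> cases hb3 : z j <;>
        simp_all [sgn, bint]
  · have heq : f i (flip z j) = f i z := by
      by_contra h
      exact ha ⟨z, fun e => h e.symm⟩
    rw [heq]; exact hu


variable {n : ℕ}

def frustratedX {n : ℕ} (f : Net n) (x : Config n) (j i : Fin n) : Prop := frustrated f x j i

lemma flipSet_apply_not_mem (x : Config n) (S : Finset (Fin n)) (i : Fin n) (h : i ∉ S) :
    flipSet x S i = x i := by simp [flipSet, h]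

lemma flipSet_empty (x : Config n) : flipSet x ∅ = x := by
  funext i; simp [flipSet]

lemma flipSet_insert (x : Config n) (S : Finset (Fin n)) (j : Fin n) (h : j ∉ S) :
    flipSet x (insert j S) = flip (flipSet x S) j := by
  funext i
  by_cases hij : i = j
  · subst hij
    rw [flip_apply_self, flipSet_apply_not_mem x S i h]
    simp [flipSet]
  · rw [flip_apply_ne _ _ _ hij]
    simp [flipSet, hij]

lemma flipSet_flip (x : Config n) (T : Finset (Fin n)) (a : Fin n) (h : a ∉ T) :
    flipSet (flip x a) T = flipSet x (insert a T) := by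
  funext i
  by_cases hia : i = a
  · subst hia
    simp [flipSet, h, flip_apply_self]
  · by_cases hiT : i ∈ T <;> simp [flipSet, hiT, hia, flip_apply_ne x a i hia]

lemma foldl_flip_eq (l : List (Fin n)) (hl : l.Nodup) (x : Config n) :
    l.foldl flip x = flipSet x l.toFinset := by
  induction l generalizing x with
  | nil => simp [flipSet_empty]
  | cons a l ih =>
    have ha : a ∉ l := (List.nodup_cons.mp hl).1
    have ha' : a ∉ l.toFinset := by simpa using ha
    rw [List.foldl_cons, ih (List.nodup_cons.mp hl).2, List.toFinset_cons,
      flipSet_flip _ _ _ ha']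

lemma flipSet_unstable (f : Net n) (hmono : MonotoneNet f) (x : Config n) (i : Fin n)
    (S : Finset (Fin n)) (hiS : i ∉ S) (hnf : ∀ j ∈ S, ¬ frustrated f x j i)
    (hu : f i x ≠ x i) : f i (flipSet x S) ≠ x i := by
  induction S using Finset.induction_on with
  | empty => rw [flipSet_empty]; exact hu
  | insert j S hjS ih =>
    have hij : i ≠ j := fun h => hiS (h ▸ Finset.mem_insert_self j S)
    have hiS' : i ∉ S := fun h => hiS (Finset.mem_insert_of_mem h)
    have hz := ih hiS' (fun k hk => hnf k (Finset.mem_insert_of_mem hk))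
    rw [flipSet_insert x S j hjS]
    have hzi : flipSet x S i = x i := flipSet_apply_not_mem x S i hiS'
    have hzj : flipSet x S j = x j := flipSet_apply_not_mem x S j hjS
    have := step_unstable f hmono x (flipSet x S) i j hij hzi hzj
      (hnf j (Finset.mem_insert_self j S)) (by rw [hzi]; exact hz)
    rw [hzi] at this; exact this

lemma topo_sort (R : Fin n → Fin n → Prop) (S : Finset (Fin n))
    (h : ∀ T ⊆ S, T.Nonempty → ∃ i ∈ T, ∀ j ∈ T, ¬ R i j) :
    ∃ l : List (Fin n), l.Nodup ∧ l.toFinset = S ∧ l.Pairwise (fun a b => ¬ R a b) := by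
  classical
  induction S using Finset.strongInduction with
  | _ S ih =>
    rcases S.eq_empty_or_nonempty with rfl | hne
    · exact ⟨[], by simp⟩
    · obtain ⟨i, hiS, hi⟩ := h S (le_refl S) hne
      have hss : S.erase i ⊂ S := Finset.erase_ssubset hiS
      obtain ⟨l', hnd', htf', hpw'⟩ := ih _ hss
        (fun T hT hTne => h T (hT.trans hss.subset) hTne)
      refine ⟨i :: l', ?_, ?_, ?_⟩
      · rw [List.nodup_cons]
        exact ⟨fun hmem => by
          have : i ∈ S.erase i := htf' ▸ List.mem_toFinset.mpr hmem
          exact (Finset.notMem_erase i S) this, hnd'⟩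
      · rw [List.toFinset_cons, htf', Finset.insert_erase hiS]
      · refine List.pairwise_cons.mpr ⟨fun b hb => ?_, hpw'⟩
        have : b ∈ S.erase i := htf' ▸ List.mem_toFinset.mpr hb
        exact hi b (Finset.mem_of_mem_erase this)


variable {n : ℕ}

lemma exists_cycle (R : Fin n → Fin n → Prop) (T : Finset (Fin n)) (hT : T.Nonempty)
    (hR : ∀ i ∈ T, ∃ j ∈ T, R i j) :
    ∃ (ℓ : ℕ) (c : Fin ℓ → Fin n), 0 < ℓ ∧ Function.Injective c ∧ (∀ k, c k ∈ T) ∧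
      ∀ k : Fin ℓ, R (c k) (c (cnext k)) := by
  classical
  obtain ⟨i0, hi0⟩ := hT
  let next : {i // i ∈ T} → {i // i ∈ T} :=
    fun p => ⟨(hR p.1 p.2).choose, (hR p.1 p.2).choose_spec.1⟩
  let g : ℕ → {i // i ∈ T} := fun k => next^[k] ⟨i0, hi0⟩
  have hgstep : ∀ k, R (g k).1 (g (k + 1)).1 := by
    intro k
    have hg : g (k + 1) = next (g k) := Function.iterate_succ_apply' next k _
    rw [hg]
    exact (hR (g k).1 (g k).2).choose_spec.2
  obtain ⟨a, b, hab, heq⟩ := Finite.exists_ne_map_eq_of_infinite (fun k : ℕ => (g k).1)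
  have hex : ∃ d, 0 < d ∧ ∃ a, (g a).1 = (g (a + d)).1 := by
    rcases lt_or_gt_of_ne hab with h | h
    · exact ⟨b - a, by omega, a, by rw [heq]; congr 2; omega⟩
    · exact ⟨a - b, by omega, b, by rw [← heq]; congr 2; omega⟩
  set d0 := Nat.find hex with hd0
  obtain ⟨hd0pos, a0, ha0⟩ := Nat.find_spec hex
  have hmin : ∀ p q : ℕ, p ≤ q → q - p < d0 → (g (a0 + p)).1 = (g (a0 + q)).1 → p = q := by
    intro p q hpq hlt he
    by_contra hne
    exact Nat.find_min hex hlt ⟨by omega, a0 + p, by rw [he]; congr 2; omega⟩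
  refine ⟨d0, fun k => (g (a0 + k.1)).1, hd0pos, ?_, fun k => (g (a0 + k.1)).2, ?_⟩
  · intro k k' he
    rcases le_total k.1 k'.1 with h | h
    · exact Fin.ext (hmin k.1 k'.1 h (by omega) he)
    · exact (Fin.ext (hmin k'.1 k.1 h (by omega) he.symm)).symm
  · intro k
    by_cases hk : k.1 + 1 < d0
    · have hc : (cnext k).1 = k.1 + 1 := Nat.mod_eq_of_lt hk
      show R (g (a0 + k.1)).1 (g (a0 + (cnext k).1)).1
      rw [hc, ← Nat.add_assoc]
      exact hgstep (a0 + k.1)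
    · have hk1 : k.1 + 1 = d0 := by omega
      have hc : (cnext k).1 = 0 := by
        show (k.1 + 1) % d0 = 0
        rw [hk1, Nat.mod_self]
      show R (g (a0 + k.1)).1 (g (a0 + (cnext k).1)).1
      rw [hc, Nat.add_zero, ha0]
      have harith : a0 + d0 = a0 + k.1 + 1 := by omega
      rw [show a0 + Nat.find hex = a0 + k.1 + 1 from harith]
      exact hgstep (a0 + k.1)

end Aux

/-- a synchronous elementary transition `x ⇒ y` such that no subset of
`Δ(x,y)` induces an `x`-critical cycle is totally sequentialisable. -/
theorem stmt16 {n : ℕ} (f : Net n) (hmono : MonotoneNet f) (x y : Config n)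
    (ht : elemTrans f x y) (hsync : 2 ≤ (diff x y).card)
    (hnc : ∀ (ℓ : ℕ) (c : Fin ℓ → Fin n),
      xCriticalCycle f x c → (∀ k, c k ∈ diff x y) → False) :
    totallySeq f x y := by
  classical
  have hU : ∀ i ∈ diff x y, f i x ≠ x i := by
    intro i hi
    have := ht.2 hi
    simpa [U] using this
  have hsrc : ∀ T ⊆ diff x y, T.Nonempty → ∃ i ∈ T, ∀ j ∈ T, ¬ frustrated f x i j := by
    intro T hTs hTne
    by_contra hcon
    push_neg at hcon
    obtain ⟨ℓ, c, hpos, hcinj, hmem, hRarc⟩ := exists_cycle (frustrated f x) T hTne hcon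
    refine hnc ℓ c ⟨⟨hpos, fun k => ?_, fun k k' hkk => ?_⟩,
      fun k => hU _ (hTs (hmem k)), hRarc⟩ (fun k => hTs (hmem k))
    · obtain ⟨s, hs, -⟩ := hRarc k
      exact hs.1
    · exact hcinj (congrArg Prod.fst hkk)
  obtain ⟨l, hnd, htf, hpw⟩ := topo_sort (frustrated f x) (diff x y) hsrc
  refine ⟨l, hnd, htf, ?_⟩
  intro t
  have hpw' := List.pairwise_iff_getElem.mp hpw
  have hnf : ∀ j ∈ l.take t.1, ¬ frustrated f x j (l.get t) := by
    intro j hj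
    rw [List.mem_take_iff_getElem] at hj
    obtain ⟨p, hp, hpe⟩ := hj
    have := hpw' p t.1 (lt_of_lt_of_le (lt_min_iff.mp hp).1 t.2.le) t.2 (lt_min_iff.mp hp).1
    rw [← hpe]
    simpa [List.get_eq_getElem] using this
  have hiT : l.get t ∉ l.take t.1 := by
    intro hmem
    rw [List.mem_take_iff_getElem] at hmem
    obtain ⟨p, hp, hpe⟩ := hmem
    have hpt : p < t.1 := (lt_min_iff.mp hp).1
    have : p = t.1 := (List.Nodup.getElem_inj_iff hnd).mp (by simpa [List.get_eq_getElem] using hpe)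
    omega
  have hfold : (l.take t.1).foldl flip x = flipSet x (l.take t.1).toFinset :=
    foldl_flip_eq _ (hnd.sublist (List.take_sublist _ _)) x
  have hiD : l.get t ∈ diff x y := htf ▸ List.mem_toFinset.mpr (List.get_mem l t)
  have hiS : l.get t ∉ (l.take t.1).toFinset := fun h => hiT (List.mem_toFinset.mp h)
  show f (l.get t) ((l.take t.1).foldl flip x) ≠ ((l.take t.1).foldl flip x) (l.get t)
  rw [hfold, flipSet_apply_not_mem x _ _ hiS]
  exact flipSet_unstable f hmono x (l.get t) _ hiS
    (fun j hj => hnf j (List.mem_toFinset.mp hj)) (hU _ hiD)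


end BAN
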